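/- Let E be the Euclidean plane ℝ² with its Euclidean norm, let c := (−4, −4) ∈ E, and let x₀ ∈ E. Then there exists a 1-Lipschitz curve x : ℝ → E with x(0) = x₀ and some t′ ∈ [0, 15] such that ‖x(s) − c‖ ≤ 1 for all s ∈ [t′ + 2, t′ + 10], if and only if ‖x₀ − c‖ ≤ 18. -/
import Mathlib


/-- The satisfying set of `F_{[0,15]} G_{[2,10]} μ₁` for the single integrator, with `μ₁`
the closed unit ball around `c = (−4, −4)`, is the closed ball of radius 18 around `c`:
the set node `𝕏₁` of the case study. -/
theorem single_integrator_node_X1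
    (c x₀ : EuclideanSpace ℝ (Fin 2)) (hc0 : c 0 = -4) (hc1 : c 1 = -4) :
    (∃ x : ℝ → EuclideanSpace ℝ (Fin 2), LipschitzWith 1 x ∧ x 0 = x₀ ∧
      ∃ t' ∈ Set.Icc (0:ℝ) 15, ∀ s ∈ Set.Icc (t' + 2) (t' + 10), ‖x s - c‖ ≤ 1) ↔
    ‖x₀ - c‖ ≤ 18 := by
  constructor
  · rintro ⟨x, hlip, hx0, t', ⟨ht0, ht15⟩, hsat⟩
    have h1 : ‖x (t' + 2) - c‖ ≤ 1 := hsat (t' + 2) ⟨le_refl _, by linarith⟩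
    have h2 : dist (x 0) (x (t' + 2)) ≤ 1 * dist (0:ℝ) (t' + 2) := hlip.dist_le_mul 0 (t' + 2)
    have h3 : dist (0:ℝ) (t' + 2) = t' + 2 := by
      rw [Real.dist_eq]; rw [abs_of_nonpos (by linarith)]; ring
    have h4 : ‖x₀ - c‖ ≤ ‖x₀ - x (t' + 2)‖ + ‖x (t' + 2) - c‖ := by
      have := dist_triangle x₀ (x (t' + 2)) c
      simpa [dist_eq_norm] using this
    have h5 : ‖x₀ - x (t' + 2)‖ ≤ t' + 2 := by
      rw [← hx0, ← dist_eq_norm]; linarith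
    linarith
  · intro hd
    set d := ‖x₀ - c‖ with hdd
    have hd0 : 0 ≤ d := norm_nonneg _
    set u : EuclideanSpace ℝ (Fin 2) := d⁻¹ • (c - x₀) with hu
    have hun : ‖u‖ ≤ 1 := by
      rcases eq_or_lt_of_le hd0 with h | h
      · simp [hu, ← hdd, norm_smul]
        have : x₀ = c := by
          have := norm_sub_eq_zero_iff.mp h.symm; exact this
        simp [this]
      · rw [hu, norm_smul, norm_inv, Real.norm_eq_abs, abs_of_pos h, norm_sub_rev]
        rw [← hdd, inv_mul_cancel₀ (ne_of_gt h)]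
    set r : ℝ := max (d - 1) 0 with hr
    set f : ℝ → ℝ := fun t => min (max t 0) r with hf
    refine ⟨fun t => x₀ + f t • u, ?_, ?_, max (d - 3) 0, ⟨le_max_right _ _, ?_⟩, ?_⟩
    · apply LipschitzWith.of_dist_le_mul
      intro s t
      have hfl : |f s - f t| ≤ |s - t| := by
        simp only [hf]
        calc |min (max s 0) r - min (max t 0) r|
            ≤ max |max s 0 - max t 0| |r - r| := abs_min_sub_min_le_max _ _ _ _
          _ = |max s 0 - max t 0| := by simp [abs_nonneg]
          _ ≤ |s - t| := abs_max_sub_max_le_abs _ _ _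
      calc dist (x₀ + f s • u) (x₀ + f t • u) = ‖(f s - f t) • u‖ := by
            rw [dist_eq_norm]; congr 1; rw [sub_smul]; abel
        _ = |f s - f t| * ‖u‖ := by rw [norm_smul, Real.norm_eq_abs]
        _ ≤ |s - t| * 1 := by
            apply mul_le_mul hfl hun (norm_nonneg _) (abs_nonneg _)
        _ = 1 * dist s t := by rw [Real.dist_eq]; ring
    · have : f 0 = 0 := by simp [hf, hr, le_max_right]
      simp [this]
    · simp only [max_le_iff]; constructor <;> linarith
    · intro s ⟨hs1, hs2⟩
      have hrle : r ≤ max (d - 3) 0 + 2 := by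
        rcases le_total (d - 3) 0 with h | h <;> rcases le_total (d - 1) 0 with h' | h' <;>
          simp [hr, max_def, h, h'] <;> linarith
      have hs0 : 0 ≤ s := by
        have : (0:ℝ) ≤ max (d - 3) 0 := le_max_right _ _
        linarith
      have hfs : f s = r := by
        simp only [hf]
        rw [max_eq_left hs0, min_eq_right (by linarith)]
      show ‖x₀ + f s • u - c‖ ≤ 1
      rw [hfs]
      rcases eq_or_lt_of_le hd0 with h | h
      · have hx : x₀ = c := norm_sub_eq_zero_iff.mp h.symm
        have hr0 : r = 0 := by simp [hr]; linarith
        simp [hx, hr0]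
      · have hdu : d • u = c - x₀ := by
          rw [hu, smul_smul, mul_inv_cancel₀ (ne_of_gt h), one_smul]
        have : x₀ + r • u - c = (r - d) • u := by
          rw [sub_smul, hdu]; abel
        rw [this, norm_smul, Real.norm_eq_abs]
        have hrd : r ≤ d := by
          rcases le_total (d - 1) 0 with h' | h' <;> simp [hr, max_def, h'] <;> linarith
        have : |r - d| ≤ 1 := by
          rw [abs_sub_le_iff]
          rcases le_total (d - 1) 0 with h' | h' <;> simp [hr, max_def, h'] <;>
            constructor <;> linarith
        calc |r - d| * ‖u‖ ≤ 1 * 1 := mul_le_mul this hun (norm_nonneg _) zero_le_one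
          _ = 1 := one_mul 1
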